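/- For t > 0 and x ∈ ℝ, one has the identity Σ_{n∈ℤ} (nt)² e^{-π t² n²} e^{2πinx} = (1/t) Σ_{n∈ℤ} (1/(2π) − ((n+x)/t)²) e^{-π(n+x)²/t²}, both series converging absolutely. -/

import Mathlib

open Complex Real Asymptotics Filter FourierTransform MeasureTheory Topology


/-- Poisson summation identity for `V_t`: for `t > 0` and `x ∈ ℝ`,
`Σ_{n∈ℤ} (nt)² e^{-π t² n²} e^{2πinx}
  = (1/t) Σ_{n∈ℤ} (1/(2π) − ((n+x)/t)²) e^{-π(n+x)²/t²}`,
both series converging absolutely. -/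
theorem stmt15 (t x : ℝ) (ht : 0 < t) :
    (Summable fun n : ℤ => ((n : ℂ) * (t : ℂ)) ^ 2 *
      Complex.exp (-(Real.pi : ℂ) * (t : ℂ) ^ 2 * (n : ℂ) ^ 2) *
      Complex.exp (2 * (Real.pi : ℂ) * Complex.I * (n : ℂ) * (x : ℂ))) ∧
    (Summable fun n : ℤ =>
      (1 / (2 * (Real.pi : ℂ)) - (((n : ℂ) + (x : ℂ)) / (t : ℂ)) ^ 2) *
      Complex.exp (-(Real.pi : ℂ) * ((n : ℂ) + (x : ℂ)) ^ 2 / (t : ℂ) ^ 2)) ∧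
    (∑' n : ℤ, ((n : ℂ) * (t : ℂ)) ^ 2 *
        Complex.exp (-(Real.pi : ℂ) * (t : ℂ) ^ 2 * (n : ℂ) ^ 2) *
        Complex.exp (2 * (Real.pi : ℂ) * Complex.I * (n : ℂ) * (x : ℂ)))
      = (1 / (t : ℂ)) *
        ∑' n : ℤ, (1 / (2 * (Real.pi : ℂ)) - (((n : ℂ) + (x : ℂ)) / (t : ℂ)) ^ 2) *
          Complex.exp (-(Real.pi : ℂ) * ((n : ℂ) + (x : ℂ)) ^ 2 / (t : ℂ) ^ 2) := by
  have ht0 : (t : ℂ) ≠ 0 := Complex.ofReal_ne_zero.mpr ht.ne'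
  have hπ0 : (Real.pi : ℂ) ≠ 0 := Complex.ofReal_ne_zero.mpr Real.pi_ne_zero
  set br : ℝ := 1 / t ^ 2 with hbr
  have hbr0 : 0 < br := by positivity
  have hbC : ((br : ℝ) : ℂ) = 1 / (t : ℂ) ^ 2 := by rw [hbr]; push_cast; ring
  set g : ℝ → ℂ := fun y => Complex.exp (-(Real.pi : ℂ) * (br : ℂ) * (y : ℂ) ^ 2) with hgdef
  have hgre : 0 < ((br : ℝ) : ℂ).re := by simpa using hbr0
  -- exponent identification
  have hexp : ∀ y : ℂ, -(Real.pi : ℂ) * (br : ℂ) * y ^ 2 = -(Real.pi : ℂ) * y ^ 2 / (t : ℂ) ^ 2 := by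
    intro y; rw [hbC]; field_simp
  -- Fourier transform of the Gaussian g
  have hsq : ((br : ℝ) : ℂ) ^ (1 / 2 : ℂ) = ((1 / t : ℝ) : ℂ) := by
    rw [show (1 / 2 : ℂ) = ((1 / 2 : ℝ) : ℂ) by norm_num, ← Complex.ofReal_cpow hbr0.le]
    congr 1
    rw [hbr, show (1 / t ^ 2 : ℝ) = (1 / t) ^ 2 by ring,
      show (1 / 2 : ℝ) = ((2 : ℕ) : ℝ)⁻¹ by norm_num,
      Real.pow_rpow_inv_natCast (by positivity) two_ne_zero]
  have hFg : 𝓕 g = fun ξ : ℝ => (t : ℂ) * Complex.exp (-(Real.pi : ℂ) * (t : ℂ) ^ 2 * (ξ : ℂ) ^ 2) := by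
    rw [hgdef]
    have := fourier_gaussian_pi hgre
    rw [this]
    funext ξ
    rw [hsq]
    have h1 : -(Real.pi : ℂ) / ((br : ℝ) : ℂ) = -(Real.pi : ℂ) * (t : ℂ) ^ 2 := by
      rw [hbC]; field_simp
    rw [h1]
    congr 1
    push_cast
    field_simp
  -- integrability of monomials times g
  have hgc : Continuous g := by
    rw [hgdef]; fun_prop
  have hInt : ∀ n : ℕ, Integrable (fun y : ℝ => (y : ℝ) ^ n • g y) := by
    intro n
    have hE : Integrable (fun y : ℝ => Real.exp (-(Real.pi * br) * y ^ 2)) :=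
      integrable_exp_neg_mul_sq (by positivity)
    have hE2 : Integrable (fun y : ℝ => y ^ (2 * n) * Real.exp (-(Real.pi * br) * y ^ 2)) := by
      have := integrable_rpow_mul_exp_neg_mul_sq (b := Real.pi * br) (by positivity)
        (s := ((2 * n : ℕ) : ℝ)) (lt_of_lt_of_le (by norm_num) (Nat.cast_nonneg _))
      simp only [Real.rpow_natCast] at this
      exact this
    have hgy : ∀ y : ℝ, ‖g y‖ = Real.exp (-(Real.pi * br) * y ^ 2) := by
      intro y
      rw [Complex.norm_exp]
      congr 1
      have : -(Real.pi : ℂ) * (br : ℂ) * (y : ℂ) ^ 2 = ((-(Real.pi * br) * y ^ 2 : ℝ) : ℂ) := by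
        push_cast; ring
      rw [this, Complex.ofReal_re]
    refine (hE.add hE2).mono' ((continuous_pow n).smul hgc).aestronglyMeasurable
      (Filter.Eventually.of_forall fun y => ?_)
    rw [norm_smul, Real.norm_eq_abs, _root_.abs_pow, hgy]
    have habs : |y| ^ n ≤ 1 + y ^ (2 * n) := by
      rcases le_or_gt |y| 1 with hy | hy
      · have := pow_le_one₀ (abs_nonneg y) hy (n := n)
        nlinarith [pow_nonneg (sq_nonneg y) n, pow_mul y 2 n]
      · have h1 : |y| ^ n ≤ |y| ^ (2 * n) := pow_le_pow_right₀ hy.le (by omega)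
        have h2 : |y| ^ (2 * n) = y ^ (2 * n) := by
          rw [pow_mul, pow_mul, _root_.sq_abs]
        nlinarith
    have hEpos : 0 ≤ Real.exp (-(Real.pi * br) * y ^ 2) := (Real.exp_pos _).le
    simp only [Pi.add_apply]
    nlinarith
  have hIg : Integrable g := by
    have := hInt 0
    simpa using this
  -- h = second-moment function
  set h : ℝ → ℂ := fun y : ℝ => (-2 * (Real.pi : ℂ) * Complex.I * (y : ℂ)) ^ 2 • g y with hhdef
  have hD2 : iteratedDeriv 2 (𝓕 g) = 𝓕 h :=
    Real.iteratedDeriv_fourier (f := g) (N := 2) (fun n _ => hInt n) le_rfl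
  have hIh : Integrable h := by
    have hc2 : Integrable (fun y : ℝ => ((-2 * (Real.pi : ℂ) * Complex.I) ^ 2) * ((y : ℝ) ^ 2 • g y)) :=
      (hInt 2).const_mul _
    refine hc2.congr (Filter.Eventually.of_forall fun y => ?_)
    rw [hhdef]
    simp only [smul_eq_mul, Complex.real_smul]
    push_cast
    ring
  -- first derivative of 𝓕 g
  have hderiv1 : deriv (𝓕 g) = fun ξ : ℝ =>
      2 * (t : ℂ) * (-(Real.pi : ℂ) * (t : ℂ) ^ 2) * (ξ : ℂ) *
        Complex.exp (-(Real.pi : ℂ) * (t : ℂ) ^ 2 * (ξ : ℂ) ^ 2) := by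
    funext ξ
    rw [hFg]
    have hc : HasDerivAt (fun z : ℂ => (t : ℂ) * Complex.exp (-(Real.pi : ℂ) * (t : ℂ) ^ 2 * z ^ 2))
        ((t : ℂ) * (Complex.exp (-(Real.pi : ℂ) * (t : ℂ) ^ 2 * (ξ : ℂ) ^ 2) *
          (-(Real.pi : ℂ) * (t : ℂ) ^ 2 * (2 * (ξ : ℂ) ^ 1)))) (ξ : ℂ) := by
      have h0 : HasDerivAt (fun z : ℂ => z ^ 2) ((2 : ℕ) * (ξ : ℂ) ^ 1) (ξ : ℂ) := hasDerivAt_pow 2 _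
      exact ((h0.const_mul (-(Real.pi : ℂ) * (t : ℂ) ^ 2)).cexp).const_mul (t : ℂ) |>.congr_deriv
        (by push_cast; ring)
    have hd : deriv (fun ξ : ℝ => (t : ℂ) * Complex.exp (-(Real.pi : ℂ) * (t : ℂ) ^ 2 * (ξ : ℂ) ^ 2)) ξ
        = (t : ℂ) * (Complex.exp (-(Real.pi : ℂ) * (t : ℂ) ^ 2 * (ξ : ℂ) ^ 2) *
          (-(Real.pi : ℂ) * (t : ℂ) ^ 2 * (2 * (ξ : ℂ) ^ 1))) := (hc.comp_ofReal).deriv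
    rw [hd]
    ring
  -- second derivative of 𝓕 g, i.e. the Fourier transform of h
  have hFh : ∀ ξ : ℝ, 𝓕 h ξ =
      2 * (t : ℂ) * (-(Real.pi : ℂ) * (t : ℂ) ^ 2) * 1 *
        Complex.exp (-(Real.pi : ℂ) * (t : ℂ) ^ 2 * (ξ : ℂ) ^ 2) +
      2 * (t : ℂ) * (-(Real.pi : ℂ) * (t : ℂ) ^ 2) * (ξ : ℂ) *
        (Complex.exp (-(Real.pi : ℂ) * (t : ℂ) ^ 2 * (ξ : ℂ) ^ 2) *
          (-(Real.pi : ℂ) * (t : ℂ) ^ 2 * (2 * (ξ : ℂ) ^ 1))) := by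
    intro ξ
    rw [← hD2]
    rw [show (2 : ℕ) = 1 + 1 from rfl, iteratedDeriv_succ, iteratedDeriv_one, hderiv1]
    have hψ : HasDerivAt (fun z : ℂ => 2 * (t : ℂ) * (-(Real.pi : ℂ) * (t : ℂ) ^ 2) * z *
        Complex.exp (-(Real.pi : ℂ) * (t : ℂ) ^ 2 * z ^ 2))
        (2 * (t : ℂ) * (-(Real.pi : ℂ) * (t : ℂ) ^ 2) * 1 *
          Complex.exp (-(Real.pi : ℂ) * (t : ℂ) ^ 2 * (ξ : ℂ) ^ 2) +
        2 * (t : ℂ) * (-(Real.pi : ℂ) * (t : ℂ) ^ 2) * (ξ : ℂ) *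
          (Complex.exp (-(Real.pi : ℂ) * (t : ℂ) ^ 2 * (ξ : ℂ) ^ 2) *
            (-(Real.pi : ℂ) * (t : ℂ) ^ 2 * (2 * (ξ : ℂ) ^ 1)))) (ξ : ℂ) := by
      have h1 : HasDerivAt (fun z : ℂ => 2 * (t : ℂ) * (-(Real.pi : ℂ) * (t : ℂ) ^ 2) * z)
          (2 * (t : ℂ) * (-(Real.pi : ℂ) * (t : ℂ) ^ 2) * 1) (ξ : ℂ) :=
        (hasDerivAt_id _).const_mul _
      have h0 : HasDerivAt (fun z : ℂ => z ^ 2) ((2 : ℕ) * (ξ : ℂ) ^ 1) (ξ : ℂ) := hasDerivAt_pow 2 _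
      have h2 : HasDerivAt (fun z : ℂ => Complex.exp (-(Real.pi : ℂ) * (t : ℂ) ^ 2 * z ^ 2))
          (Complex.exp (-(Real.pi : ℂ) * (t : ℂ) ^ 2 * (ξ : ℂ) ^ 2) *
            (-(Real.pi : ℂ) * (t : ℂ) ^ 2 * (2 * (ξ : ℂ) ^ 1))) (ξ : ℂ) :=
        (h0.const_mul (-(Real.pi : ℂ) * (t : ℂ) ^ 2)).cexp.congr_deriv (by push_cast; ring)
      exact h1.mul h2
    exact (hψ.comp_ofReal).deriv
  -- the function f and its Fourier transform
  set A : ℂ := 1 / (2 * (Real.pi : ℂ) * (t : ℂ)) with hA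
  set C : ℂ := 1 / (4 * (Real.pi : ℂ) ^ 2 * (t : ℂ) ^ 3) with hC
  set f : ℝ → ℂ := fun y => A * g y + C * h y with hfdef
  have hfc : Continuous f := by
    rw [hfdef, hhdef]
    fun_prop
  have hIf : Integrable f := ((hIg.const_mul A).add (hIh.const_mul C)).congr
    (Filter.Eventually.of_forall fun y => rfl)
  have hlin : 𝓕 f = fun ξ : ℝ => A * 𝓕 g ξ + C * 𝓕 h ξ := by
    have h1 : f = (A • g) + (C • h) := by
      funext y; simp [hfdef, Pi.add_apply, Pi.smul_apply, smul_eq_mul]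
    rw [h1]
    have hadd : 𝓕 (A • g + C • h) = 𝓕 (A • g) + 𝓕 (C • h) :=
      VectorFourier.fourierIntegral_add (Real.continuous_fourierChar) continuous_inner
        (hIg.smul A) (hIh.smul C)
    have hs1 : 𝓕 (A • g) = A • 𝓕 g := VectorFourier.fourierIntegral_const_smul _ _ _ _ _
    have hs2 : 𝓕 (C • h) = C • 𝓕 h := VectorFourier.fourierIntegral_const_smul _ _ _ _ _
    rw [hadd, hs1, hs2]
    funext ξ
    simp [Pi.add_apply, Pi.smul_apply, smul_eq_mul]
  have hFf : ∀ ξ : ℝ, 𝓕 f ξ =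
      ((ξ : ℂ) * (t : ℂ)) ^ 2 * Complex.exp (-(Real.pi : ℂ) * (t : ℂ) ^ 2 * (ξ : ℂ) ^ 2) := by
    intro ξ
    rw [congrFun hlin ξ, congrFun hFg ξ, hFh ξ]
    rw [hA, hC]
    field_simp
    ring_nf
  -- decay bounds
  have habs24 : (fun y : ℝ => |y| ^ (2 : ℝ) * |y| ^ (-4 : ℝ)) = (fun y : ℝ => |y| ^ (-2 : ℝ)) := by
    funext y
    rcases eq_or_ne y 0 with hy | hy
    · rw [hy]
      simp [Real.zero_rpow]
    · rw [← Real.rpow_add (abs_pos.mpr hy)]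
      norm_num
  have hp1 : (fun y : ℝ => ((y : ℂ)) ^ 2) =O[cocompact ℝ] (fun y => |y| ^ (2 : ℝ)) := by
    apply isBigO_of_le
    intro y
    rw [norm_pow, Complex.norm_real, Real.norm_eq_abs, Real.norm_eq_abs,
      show (2 : ℝ) = ((2 : ℕ) : ℝ) by norm_num, Real.rpow_natCast]
    exact le_abs_self _
  have hquad : ∀ a : ℂ, a.re < 0 →
      (fun y : ℝ => ((y : ℂ)) ^ 2 * Complex.exp (a * (y : ℂ) ^ 2)) =O[cocompact ℝ]
        (fun y => |y| ^ (-2 : ℝ)) := by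
    intro a ha
    have hp2 : (fun y : ℝ => Complex.exp (a * (y : ℂ) ^ 2)) =O[cocompact ℝ]
        (fun y => |y| ^ (-4 : ℝ)) := by
      have := (cexp_neg_quadratic_isLittleO_abs_rpow_cocompact ha 0 (-4)).isBigO
      refine this.congr' (Filter.Eventually.of_forall fun y => ?_) EventuallyEq.rfl
      simp
    have := hp1.mul hp2
    rwa [habs24] at this
  have hreg : (-(Real.pi : ℂ) * (br : ℂ)).re < 0 := by
    have : -(Real.pi : ℂ) * (br : ℂ) = ((-(Real.pi * br) : ℝ) : ℂ) := by push_cast; ring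
    rw [this, Complex.ofReal_re]
    have : 0 < Real.pi * br := by positivity
    linarith
  have hret : (-(Real.pi : ℂ) * (t : ℂ) ^ 2).re < 0 := by
    have : -(Real.pi : ℂ) * (t : ℂ) ^ 2 = ((-(Real.pi * t ^ 2) : ℝ) : ℂ) := by push_cast; ring
    rw [this, Complex.ofReal_re]
    have : 0 < Real.pi * t ^ 2 := by positivity
    linarith
  have hg_bd : g =O[cocompact ℝ] (fun y => |y| ^ (-2 : ℝ)) := by
    have := (cexp_neg_quadratic_isLittleO_abs_rpow_cocompact hreg 0 (-2)).isBigO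
    rw [hgdef]
    refine this.congr' (Filter.Eventually.of_forall fun y => ?_) EventuallyEq.rfl
    simp
  have hh_bd : h =O[cocompact ℝ] (fun y => |y| ^ (-2 : ℝ)) := by
    rw [hhdef, hgdef]
    have heq : (fun y : ℝ => (-2 * (Real.pi : ℂ) * Complex.I * (y : ℂ)) ^ 2 •
        Complex.exp (-(Real.pi : ℂ) * (br : ℂ) * (y : ℂ) ^ 2)) =
        fun y : ℝ => ((-2 * (Real.pi : ℂ) * Complex.I) ^ 2) *
          (((y : ℂ)) ^ 2 * Complex.exp (-(Real.pi : ℂ) * (br : ℂ) * (y : ℂ) ^ 2)) := by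
      funext y; simp only [smul_eq_mul]; ring
    rw [heq]
    exact (hquad _ hreg).const_mul_left _
  have f_bd : f =O[cocompact ℝ] (fun y => |y| ^ (-2 : ℝ)) := by
    rw [hfdef]
    exact (hg_bd.const_mul_left A).add (hh_bd.const_mul_left C)
  have Ff_bd : (𝓕 f) =O[cocompact ℝ] (fun y => |y| ^ (-2 : ℝ)) := by
    have heq : 𝓕 f = fun ξ : ℝ => (t : ℂ) ^ 2 *
        (((ξ : ℂ)) ^ 2 * Complex.exp (-(Real.pi : ℂ) * (t : ℂ) ^ 2 * (ξ : ℂ) ^ 2)) :=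
      funext fun ξ => (hFf ξ).trans (by ring)
    rw [heq]
    exact (hquad _ hret).const_mul_left _
  -- Poisson summation
  have poisson := Real.tsum_eq_tsum_fourier_of_rpow_decay hfc one_lt_two f_bd Ff_bd x
  -- pointwise value of f
  have hfval : ∀ y : ℝ, (t : ℂ) * f y =
      (1 / (2 * (Real.pi : ℂ)) - ((y : ℂ) / (t : ℂ)) ^ 2) *
        Complex.exp (-(Real.pi : ℂ) * (y : ℂ) ^ 2 / (t : ℂ) ^ 2) := by
    intro y
    rw [hfdef]
    simp only [hhdef, hgdef, smul_eq_mul]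
    rw [hexp ((y : ℂ))]
    rw [hA, hC]
    have hI : (-2 * (Real.pi : ℂ) * Complex.I * (y : ℂ)) ^ 2 = -(2 * (Real.pi : ℂ) * (y : ℂ)) ^ 2 := by
      rw [show (-2 * (Real.pi : ℂ) * Complex.I * (y : ℂ)) ^ 2
        = (2 * (Real.pi : ℂ) * (y : ℂ)) ^ 2 * Complex.I ^ 2 by ring, Complex.I_sq]
      ring
    rw [hI]
    field_simp [ht0, hπ0]
    ring
  -- summability of the first series
  have hS1 : Summable fun n : ℤ => ((n : ℂ) * (t : ℂ)) ^ 2 *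
      Complex.exp (-(Real.pi : ℂ) * (t : ℂ) ^ 2 * (n : ℂ) ^ 2) *
      Complex.exp (2 * (Real.pi : ℂ) * Complex.I * (n : ℂ) * (x : ℂ)) := by
    refine summable_of_isBigO (Real.summable_abs_int_rpow one_lt_two) ?_
    have hcomp : (fun n : ℤ => 𝓕 f ((n : ℤ) : ℝ)) =O[cofinite]
        (fun n : ℤ => |((n : ℤ) : ℝ)| ^ (-2 : ℝ)) := Ff_bd.comp_tendsto Int.tendsto_coe_cofinite
    refine IsBigO.trans (isBigO_of_le _ fun n => le_of_eq ?_) hcomp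
    rw [hFf]
    have h1 : ‖Complex.exp (2 * (Real.pi : ℂ) * Complex.I * (n : ℂ) * (x : ℂ))‖ = 1 := by
      rw [Complex.norm_exp]
      have : (2 * (Real.pi : ℂ) * Complex.I * (n : ℂ) * (x : ℂ)).re = 0 := by
        simp [Complex.mul_re, Complex.mul_im]
      rw [this, Real.exp_zero]
    rw [norm_mul, h1, mul_one]
    congr 2
  -- summability of the shifted series
  have hK : ∀ K : TopologicalSpace.Compacts ℝ,
      Summable fun n : ℤ => ‖((ContinuousMap.mk f hfc).comp
        (ContinuousMap.addRight ((n : ℤ) : ℝ))).restrict K‖ := fun K =>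
    summable_of_isBigO (Real.summable_abs_int_rpow one_lt_two)
      ((isBigO_norm_restrict_cocompact (ContinuousMap.mk f hfc) (by norm_num : (0:ℝ) < 2)
        f_bd K).comp_tendsto Int.tendsto_coe_cofinite)
  have hSf : Summable fun n : ℤ => f (x + (n : ℤ)) := by
    apply Summable.of_norm
    refine Summable.of_nonneg_of_le (fun n => norm_nonneg _) (fun n => ?_)
      (hK ⟨{x}, isCompact_singleton⟩)
    have hmem : x ∈ ({x} : Set ℝ) := rfl
    have := ContinuousMap.norm_coe_le_norm
      (((ContinuousMap.mk f hfc).comp (ContinuousMap.addRight ((n : ℤ) : ℝ))).restrict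
        ({x} : Set ℝ)) ⟨x, hmem⟩
    simpa using this
  have hterm : ∀ n : ℤ, (t : ℂ) * f (x + (n : ℤ)) =
      (1 / (2 * (Real.pi : ℂ)) - (((n : ℂ) + (x : ℂ)) / (t : ℂ)) ^ 2) *
        Complex.exp (-(Real.pi : ℂ) * ((n : ℂ) + (x : ℂ)) ^ 2 / (t : ℂ) ^ 2) := by
    intro n
    rw [hfval]
    rw [show ((x + ((n : ℤ) : ℝ) : ℝ) : ℂ) = ((n : ℂ) + (x : ℂ)) by push_cast; ring]
  have hS2 : Summable fun n : ℤ =>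
      (1 / (2 * (Real.pi : ℂ)) - (((n : ℂ) + (x : ℂ)) / (t : ℂ)) ^ 2) *
      Complex.exp (-(Real.pi : ℂ) * ((n : ℂ) + (x : ℂ)) ^ 2 / (t : ℂ) ^ 2) :=
    (hSf.mul_left (t : ℂ)).congr hterm
  refine ⟨hS1, hS2, ?_⟩
  -- main identity
  have hL : (∑' n : ℤ, ((n : ℂ) * (t : ℂ)) ^ 2 *
      Complex.exp (-(Real.pi : ℂ) * (t : ℂ) ^ 2 * (n : ℂ) ^ 2) *
      Complex.exp (2 * (Real.pi : ℂ) * Complex.I * (n : ℂ) * (x : ℂ)))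
      = ∑' n : ℤ, 𝓕 f ((n : ℤ) : ℝ) * fourier n (x : UnitAddCircle) := by
    refine tsum_congr fun n => ?_
    rw [hFf, fourier_coe_apply, Complex.ofReal_one, div_one]
    congr 3
  rw [hL, ← poisson]
  have hR : ∀ n : ℤ, f (x + (n : ℤ)) = (1 / (t : ℂ)) *
      ((1 / (2 * (Real.pi : ℂ)) - (((n : ℂ) + (x : ℂ)) / (t : ℂ)) ^ 2) *
        Complex.exp (-(Real.pi : ℂ) * ((n : ℂ) + (x : ℂ)) ^ 2 / (t : ℂ) ^ 2)) := by
    intro n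
    rw [← hterm n]
    field_simp
  rw [tsum_congr hR, tsum_mul_left]
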